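/- Let A be an abelian group, k ≥ 1 and n natural numbers. For a function f : {0,1}^n → A and a subset S ⊆ [n], define w_S(f) := ∑_{v ∈ {0,1}^n, supp(v) ⊆ S} (−1)^{h(v)} f(v). Then every function f₀ : {v ∈ {0,1}^n : h(v) ≤ k} → A extends to a unique function f : {0,1}^n → A satisfying w_S(f) = 0 for every subset S ⊆ [n] with |S| ≥ k + 1. -/

import Mathlib

/-- The height `h(v) = ∑ᵢ vᵢ` of `v ∈ {0,1}^n`. -/
def cubeHeight {n : ℕ} (v : Fin n → Bool) : ℕ :=
  (Finset.univ.filter fun i => v i = true).card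

/-- For `f : {0,1}^n → A` and `S ⊆ [n]`,
`w_S(f) = ∑_{supp(v) ⊆ S} (-1)^{h(v)} f(v)`. -/
def wSum {A : Type*} [AddCommGroup A] {n : ℕ} (S : Finset (Fin n))
    (f : (Fin n → Bool) → A) : A :=
  ∑ v ∈ Finset.univ.filter fun v : Fin n → Bool => ∀ i, v i = true → i ∈ S,
    ((-1 : ℤ) ^ cubeHeight v) • f v

open Finset

namespace ExtAux

variable {A : Type*} [AddCommGroup A] {n : ℕ}

def ofSet (T : Finset (Fin n)) : Fin n → Bool := fun i => decide (i ∈ T)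

def toSet (v : Fin n → Bool) : Finset (Fin n) := univ.filter fun i => v i = true

lemma toSet_ofSet (T : Finset (Fin n)) : toSet (ofSet T) = T := by
  ext i; simp [toSet, ofSet]

lemma ofSet_toSet (v : Fin n → Bool) : ofSet (toSet v) = v := by
  funext i; simp [toSet, ofSet]

lemma cubeHeight_eq (v : Fin n → Bool) : cubeHeight v = (toSet v).card := rfl

/-- The "Möbius/zeta" transform. -/
def M (F : Finset (Fin n) → A) (S : Finset (Fin n)) : A :=
  ∑ T ∈ S.powerset, ((-1 : ℤ) ^ T.card) • F T

lemma wSum_eq (S : Finset (Fin n)) (f : (Fin n → Bool) → A) :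
    wSum S f = M (fun T => f (ofSet T)) S := by
  unfold wSum M
  refine Finset.sum_nbij' (i := fun v => toSet v) (j := fun T => ofSet T)
    ?_ ?_ ?_ ?_ ?_
  · intro v hv
    rw [mem_filter] at hv
    rw [mem_powerset]
    intro i hi
    simp only [toSet, mem_filter] at hi
    exact hv.2 i hi.2
  · intro T hT
    rw [mem_powerset] at hT
    rw [mem_filter]
    refine ⟨mem_univ _, fun i hi => ?_⟩
    simp only [ofSet, decide_eq_true_iff] at hi
    exact hT hi
  · intro v _; exact ofSet_toSet v
  · intro T _; exact toSet_ofSet T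
  · intro v _
    simp only [cubeHeight_eq, ofSet_toSet]

lemma key_sum (T U : Finset (Fin n)) (h : T ⊆ U) :
    ∑ S ∈ U.powerset.filter (T ⊆ ·), ((-1 : ℤ) ^ S.card)
      = if T = U then (-1 : ℤ) ^ T.card else 0 := by
  have hIcc : U.powerset.filter (T ⊆ ·) = Finset.Icc T U := (Icc_eq_filter_powerset T U).symm
  rw [hIcc, Icc_eq_image_powerset h, Finset.sum_image]
  · have : ∀ R ∈ (U \ T).powerset, ((-1 : ℤ) ^ (T ∪ R).card)
        = ((-1 : ℤ) ^ T.card) * ((-1 : ℤ) ^ R.card) := by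
      intro R hR
      rw [mem_powerset] at hR
      have hdisj : Disjoint T R :=
        Finset.disjoint_left.mpr fun a haT haR => (Finset.mem_sdiff.mp (hR haR)).2 haT
      rw [card_union_of_disjoint hdisj, pow_add]
    rw [Finset.sum_congr rfl this, ← Finset.mul_sum, Finset.sum_powerset_neg_one_pow_card]
    by_cases hTU : T = U
    · simp [hTU]
    · have : U \ T ≠ ∅ := by
        intro hempty
        exact hTU (Finset.Subset.antisymm h (by
          intro a ha
          by_contra haT
          have : a ∈ U \ T := Finset.mem_sdiff.mpr ⟨ha, haT⟩
          simp [hempty] at this))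
      simp [hTU, this]
  · intro u hu v hv huv
    rw [Finset.mem_coe, mem_powerset] at hu hv
    have hdu : Disjoint T u :=
      Finset.disjoint_left.mpr fun a haT hau => (Finset.mem_sdiff.mp (hu hau)).2 haT
    have hdv : Disjoint T v :=
      Finset.disjoint_left.mpr fun a haT hav => (Finset.mem_sdiff.mp (hv hav)).2 haT
    beta_reduce at huv
    have : (T ∪ u) \ T = (T ∪ v) \ T := by rw [huv]
    rwa [Finset.union_sdiff_cancel_left hdu, Finset.union_sdiff_cancel_left hdv] at this

lemma M_M (F : Finset (Fin n) → A) (U : Finset (Fin n)) : M (M F) U = F U := by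
  unfold M
  have step1 : ∑ S ∈ U.powerset, ((-1 : ℤ) ^ S.card) •
        ∑ T ∈ S.powerset, ((-1 : ℤ) ^ T.card) • F T
      = ∑ S ∈ U.powerset, ∑ T ∈ U.powerset,
          (if T ⊆ S then (((-1 : ℤ) ^ S.card) * ((-1 : ℤ) ^ T.card)) • F T else 0) := by
    refine Finset.sum_congr rfl fun S hS => ?_
    rw [mem_powerset] at hS
    rw [Finset.smul_sum]
    have hdom : S.powerset = U.powerset.filter (· ⊆ S) := by
      ext T
      simp only [mem_powerset, mem_filter]
      exact ⟨fun h => ⟨h.trans hS, h⟩, fun h => h.2⟩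
    rw [hdom, Finset.sum_filter]
    refine Finset.sum_congr rfl fun T _ => ?_
    by_cases hTS : T ⊆ S
    · simp [hTS, smul_smul]
    · simp [hTS]
  rw [step1, Finset.sum_comm]
  have step2 : ∀ T ∈ U.powerset,
      (∑ S ∈ U.powerset, if T ⊆ S then (((-1 : ℤ) ^ S.card) * ((-1 : ℤ) ^ T.card)) • F T else 0)
      = (if T = U then (1 : ℤ) else 0) • F T := by
    intro T hT
    rw [mem_powerset] at hT
    rw [← Finset.sum_filter]
    have : ∑ S ∈ U.powerset.filter (T ⊆ ·), (((-1 : ℤ) ^ S.card) * ((-1 : ℤ) ^ T.card)) • F T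
        = ((∑ S ∈ U.powerset.filter (T ⊆ ·), ((-1 : ℤ) ^ S.card)) * ((-1 : ℤ) ^ T.card)) • F T := by
      rw [Finset.sum_mul, Finset.sum_smul]
    rw [this, key_sum T U hT]
    by_cases hTU : T = U
    · simp [hTU, ← pow_add, ← two_mul]
    · simp [hTU]
  rw [Finset.sum_congr rfl step2]
  simp only [ite_smul, one_smul, zero_smul]
  rw [Finset.sum_ite_eq' U.powerset U F]
  simp

end ExtAux

open ExtAux in
theorem unique_extension_higher_degree {A : Type*} [AddCommGroup A]
    (k n : ℕ) (hk : 1 ≤ k) (f₀ : (Fin n → Bool) → A) :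
    ∃! f : (Fin n → Bool) → A,
      (∀ v, cubeHeight v ≤ k → f v = f₀ v) ∧
      ∀ S : Finset (Fin n), k + 1 ≤ S.card → wSum S f = 0 := by
  classical
  set F₀ : Finset (Fin n) → A := fun T => f₀ (ofSet T) with hF₀
  set G : Finset (Fin n) → A := fun S => if S.card ≤ k then M F₀ S else 0 with hG
  refine ⟨fun v => M G (toSet v), ⟨?_, ?_⟩, ?_⟩
  · intro v hv
    rw [cubeHeight_eq] at hv
    have hMG : M G (toSet v) = M (M F₀) (toSet v) := by
      unfold M
      refine Finset.sum_congr rfl fun T hT => ?_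
      rw [mem_powerset] at hT
      have hcard : T.card ≤ k := le_trans (card_le_card hT) hv
      rw [hG]; simp only [if_pos hcard]
      rfl
    show M G (toSet v) = f₀ v
    rw [hMG, M_M]
    simp only [hF₀, ofSet_toSet]
  · intro S hS
    show wSum S (fun v => M G (toSet v)) = 0
    rw [wSum_eq]
    have : (fun T => M G (toSet (ofSet T))) = M G := by
      funext T; rw [toSet_ofSet]
    rw [this, M_M, hG]
    have : ¬ S.card ≤ k := by omega
    simp [this]
  · rintro f' ⟨h1, h2⟩
    funext v
    have key : M (fun T => f' (ofSet T)) = G := by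
      funext S
      by_cases hc : S.card ≤ k
      · rw [hG]; simp only [if_pos hc]
        unfold M
        refine Finset.sum_congr rfl fun T hT => ?_
        rw [mem_powerset] at hT
        have : cubeHeight (ofSet T) ≤ k := by
          rw [cubeHeight_eq, toSet_ofSet]
          exact le_trans (card_le_card hT) hc
        simp only [hF₀]
        rw [h1 (ofSet T) this]
      · have hS : k + 1 ≤ S.card := by omega
        have := h2 S hS
        rw [wSum_eq] at this
        rw [hG]; simp only [if_neg hc]
        exact this
    have hval : f' v = M (M (fun T => f' (ofSet T))) (toSet v) := by
      rw [M_M, ofSet_toSet]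
    show f' v = M G (toSet v)
    rw [hval, key]
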